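/- If D(z) is the unique formal power series with constant term 1 and non-negative coefficients satisfying D = 1/(1 − z^2 D^4 (1 + S(z^3 D^6))), where S = z(1+S)^3 with S(0)=0, then B(z) = zD(z) satisfies B^9 − z^2 B^5 + z^3 B^4 + z^3 B^3 − 3 z^4 B^2 + 3 z^5 B − z^6 = 0 as formal power series identities. -/

import Mathlib

open PowerSeries

/-- Algebraic elimination identity: let `S` be the ternary-tree series (`S(0)=0`,
`S = z(1+S)^3`), let `T = S(z^3 D^6)` (encoded by `T(0)=0` and `T = z^3 D^6 (1+T)^3`, which
uniquely characterises the substitution), and let `D` be the series with `D(0)=1` and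
non-negative coefficients satisfying `D = 1/(1 - z^2 D^4 (1 + S(z^3 D^6)))`. Then
`B = z D` satisfies `B^9 - z^2 B^5 + z^3 B^4 + z^3 B^3 - 3 z^4 B^2 + 3 z^5 B - z^6 = 0`. -/
theorem chordal_maps_elimination (S D T B : PowerSeries ℚ)
    (hS0 : PowerSeries.constantCoeff S = 0)
    (hS : S = PowerSeries.X * (1 + S) ^ 3)
    (hT0 : PowerSeries.constantCoeff T = 0)
    (hT : T = PowerSeries.X ^ 3 * D ^ 6 * (1 + T) ^ 3)
    (hD0 : PowerSeries.constantCoeff D = 1)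
    (hDnonneg : ∀ n : ℕ, 0 ≤ PowerSeries.coeff n D)
    (hD : D * (1 - PowerSeries.X ^ 2 * D ^ 4 * (1 + T)) = 1)
    (hB : B = PowerSeries.X * D) :
    B ^ 9 - PowerSeries.X ^ 2 * B ^ 5 + PowerSeries.X ^ 3 * B ^ 4 +
      PowerSeries.X ^ 3 * B ^ 3 - 3 * PowerSeries.X ^ 4 * B ^ 2 +
      3 * PowerSeries.X ^ 5 * B - PowerSeries.X ^ 6 = 0 := by
  subst hB
  linear_combination (-(PowerSeries.X:PowerSeries ℚ)^7 * D^4 + PowerSeries.X^6 * ((D-1)^2 + (D-1) * (PowerSeries.X^2 * D^5 * (1+T)) + PowerSeries.X^4 * D^10 * (1+T)^2)) * hD + (-(PowerSeries.X:PowerSeries ℚ)^9 * D^9) * hT
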